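/- Let g be a Lie algebra over a field K of characteristic 0 and M a finite-dimensional g-module with d = dim M. Then for every n ≥ 1, every cyclic U(g)-submodule C of the tensor power M^{⊗n} satisfies dim C ≤ binom(n + d² - 1, n). In particular the dimensions of cyclic submodules of M^{⊗n} are bounded by a polynomial in n of degree d² - 1. -/

import Mathlib

open scoped TensorProduct

/-- A bundled Lie module over the Lie algebra `g` (over the field `K`). -/
structure LieModBundle (K g : Type*) [CommRing K] [LieRing g] [LieAlgebra K g] where
  carrier : Type u_3
  [acg : AddCommGroup carrier]
  [mod : Module K carrier]
  [lrm : LieRingModule g carrier]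
  [lm : LieModule K g carrier]

variable (K g M : Type) [Field K] [LieRing g] [LieAlgebra K g]
  [AddCommGroup M] [Module K M] [LieRingModule g M] [LieModule K g M]

/-- `tensorPower K g M n` is the `(n+1)`-fold tensor power `M ⊗ ⋯ ⊗ M`, with the
diagonal `g`-action coming from the (cocommutative) coproduct of `U(g)`. -/
noncomputable def tensorPower : ℕ → LieModBundle K g
  | 0 => LieModBundle.mk M
  | (n+1) =>
      letI B := tensorPower n
      letI := B.acg; letI := B.mod; letI := B.lrm; letI := B.lm
      LieModBundle.mk (M ⊗[K] B.carrier)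

noncomputable instance tpAcg (m : ℕ) : AddCommGroup (tensorPower K g M m).carrier :=
  (tensorPower K g M m).acg
noncomputable instance tpMod (m : ℕ) : Module K (tensorPower K g M m).carrier :=
  (tensorPower K g M m).mod
noncomputable instance tpLrm (m : ℕ) : LieRingModule g (tensorPower K g M m).carrier :=
  (tensorPower K g M m).lrm
noncomputable instance tpLm (m : ℕ) : LieModule K g (tensorPower K g M m).carrier :=
  (tensorPower K g M m).lm

/-- `tmap m w` is the operator `w 0 ⊗ w 1 ⊗ ⋯ ⊗ w m` on the `(m+1)`-fold tensor power. -/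
noncomputable def tmap : (m : ℕ) → (Fin (m+1) → Module.End K M) →
    Module.End K (tensorPower K g M m).carrier
  | 0, w => w 0
  | (m+1), w => TensorProduct.map (w 0) (tmap m (w ∘ Fin.succ))

theorem tmap_one : ∀ m, tmap K g M m (fun _ => 1) = 1
  | 0 => rfl
  | (m+1) => by
      show TensorProduct.map 1 (tmap K g M m ((fun _ => 1) ∘ Fin.succ)) = 1
      rw [show ((fun _ => (1:Module.End K M)) ∘ Fin.succ) = fun _ => 1 from rfl,
        tmap_one m]
      exact TensorProduct.map_one

theorem tmap_mul : ∀ m (w w' : Fin (m+1) → Module.End K M),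
    tmap K g M m (fun j => w j * w' j) = tmap K g M m w * tmap K g M m w'
  | 0, w, w' => rfl
  | (m+1), w, w' => by
      show TensorProduct.map (w 0 * w' 0)
        (tmap K g M m ((fun j => w j * w' j) ∘ Fin.succ)) = _
      rw [show ((fun j => w j * w' j) ∘ Fin.succ)
          = fun j => (w ∘ Fin.succ) j * (w' ∘ Fin.succ) j from rfl,
        tmap_mul m, TensorProduct.map_mul]
      rfl

theorem tmap_succ (m : ℕ) (w : Fin (m+2) → Module.End K M) :
    tmap K g M (m+1) w = TensorProduct.map (w 0) (tmap K g M m (w ∘ Fin.succ)) := rfl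

open Function in
theorem update_zero_comp_succ {m : ℕ} {β : Type*} (w : Fin (m+2) → β) (x : β) :
    update w 0 x ∘ Fin.succ = w ∘ Fin.succ :=
  update_comp_eq_of_forall_ne w x fun j => Fin.succ_ne_zero j

open Function in
theorem update_succ_comp_succ {m : ℕ} {β : Type*} (w : Fin (m+2) → β) (i : Fin (m+1)) (x : β) :
    update w i.succ x ∘ Fin.succ = update (w ∘ Fin.succ) i x :=
  update_comp_eq_of_injective w (Fin.succ_injective _) i x

open Function in
theorem update_succ_apply_zero {m : ℕ} {β : Type*} (w : Fin (m+2) → β) (i : Fin (m+1)) (x : β) :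
    update w i.succ x 0 = w 0 :=
  update_of_ne (Fin.succ_ne_zero i).symm x w

open Function in
theorem tmap_update_add : ∀ m (w : Fin (m+1) → Module.End K M) (i : Fin (m+1))
    (x y : Module.End K M),
    tmap K g M m (update w i (x + y))
      = tmap K g M m (update w i x) + tmap K g M m (update w i y)
  | 0, w, i, x, y => by
      have h0 : i = 0 := Fin.ext (by omega)
      subst h0
      show update w 0 (x+y) 0 = update w 0 x 0 + update w 0 y 0
      simp
  | (m+1), w, i, x, y => by
      induction i using Fin.cases with
      | zero =>
          simp only [tmap_succ, update_zero_comp_succ, update_self,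
            TensorProduct.map_add_left]
          rfl
      | succ i =>
          simp only [tmap_succ, update_succ_apply_zero, update_succ_comp_succ,
            tmap_update_add m, TensorProduct.map_add_right]
          rfl

open Function in
theorem tmap_update_smul : ∀ m (w : Fin (m+1) → Module.End K M) (i : Fin (m+1))
    (c : K) (x : Module.End K M),
    tmap K g M m (update w i (c • x)) = c • tmap K g M m (update w i x)
  | 0, w, i, c, x => by
      have h0 : i = 0 := Fin.ext (by omega)
      subst h0
      show update w 0 (c • x) 0 = c • update w 0 x 0
      simp
  | (m+1), w, i, c, x => by
      induction i using Fin.cases with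
      | zero =>
          simp only [tmap_succ, update_zero_comp_succ, update_self,
            TensorProduct.map_smul_left]
          rfl
      | succ i =>
          simp only [tmap_succ, update_succ_apply_zero, update_succ_comp_succ,
            tmap_update_smul m, TensorProduct.map_smul_right]
          rfl

/-- `tmap` as a multilinear map. -/
noncomputable def tmapL (m : ℕ) :
    MultilinearMap K (fun _ : Fin (m+1) => Module.End K M)
      (Module.End K (tensorPower K g M m).carrier) where
  toFun := tmap K g M m
  map_update_add' := by
    intro dec w i x y
    have : dec = instDecidableEqFin (m+1) := Subsingleton.elim _ _
    subst this
    exact tmap_update_add K g M m w i x y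
  map_update_smul' := by
    intro dec w i c x
    have : dec = instDecidableEqFin (m+1) := Subsingleton.elim _ _
    subst this
    exact tmap_update_smul K g M m w i c x

open Function in
/-- The diagonal action of `g` on the tensor power, expressed via `tmap`. -/
theorem toEnd_eq : ∀ (m : ℕ) (x : g),
    LieModule.toEnd K g (tensorPower K g M m).carrier x
      = ∑ i : Fin (m+1), tmap K g M m (update (fun _ => 1) i (LieModule.toEnd K g M x))
  | 0, x => by
      rw [Fin.sum_univ_one]
      show LieModule.toEnd K g M x = update (fun _ => (1:Module.End K M)) 0
        (LieModule.toEnd K g M x) 0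
      rw [update_self]
  | (m+1), x => by
      have hL : LieModule.toEnd K g (tensorPower K g M (m+1)).carrier x
          = TensorProduct.LieModule.hasBracketAux (R := K) (M := M)
            (N := (tensorPower K g M m).carrier) x := LinearMap.ext fun u => rfl
      rw [hL, Fin.sum_univ_succ]
      have h0 : tmap K g M (m+1) (update (fun _ => 1) 0 (LieModule.toEnd K g M x))
          = TensorProduct.map (LieModule.toEnd K g M x) 1 := by
        rw [tmap_succ, update_zero_comp_succ, update_self]
        rw [show ((fun _ => (1:Module.End K M)) ∘ Fin.succ) = fun _ => 1 from rfl, tmap_one]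
      have hs : ∀ i : Fin (m+1),
          tmap K g M (m+1) (update (fun _ => 1) i.succ (LieModule.toEnd K g M x))
            = TensorProduct.map 1 (tmap K g M m (update (fun _ => 1) i
                (LieModule.toEnd K g M x))) := by
        intro i
        rw [tmap_succ, update_succ_apply_zero, update_succ_comp_succ]
        rfl
      rw [h0]
      rw [Finset.sum_congr rfl fun i _ => hs i]
      have hsum : ∑ i : Fin (m+1), TensorProduct.map (1 : Module.End K M)
            (tmap K g M m (update (fun _ => 1) i (LieModule.toEnd K g M x)))
          = TensorProduct.map 1 (∑ i : Fin (m+1),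
              tmap K g M m (update (fun _ => 1) i (LieModule.toEnd K g M x))) := by
        exact (map_sum (LinearMap.lTensorHom (R := K) (N := (tensorPower K g M m).carrier)
          (P := (tensorPower K g M m).carrier) M)
          (fun i => tmap K g M m (update (fun _ => 1) i (LieModule.toEnd K g M x)))
          Finset.univ).symm
      erw [hsum, ← toEnd_eq m x]
      rfl

section FinDim
variable [FiniteDimensional K M]

/-- Dimension of the endomorphism algebra. -/
noncomputable abbrev eDim : ℕ := Module.finrank K (Module.End K M)

/-- A basis of the endomorphism algebra. -/
noncomputable def bE : Module.Basis (Fin (eDim K M)) K (Module.End K M) :=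
  Module.finBasis K (Module.End K M)

/-- The operator obtained by tensoring basis vectors of `End K M` indexed by `f`. -/
noncomputable def Phi (m : ℕ) (f : Fin (m+1) → Fin (eDim K M)) :
    Module.End K (tensorPower K g M m).carrier :=
  tmap K g M m (fun j => bE K M (f j))

/-- A coefficient function is invariant if it is symmetric under permutations of slots. -/
def IsInv (m : ℕ) (c : (Fin (m+1) → Fin (eDim K M)) → K) : Prop :=
  ∀ (σ : Equiv.Perm (Fin (m+1))) (f : Fin (m+1) → Fin (eDim K M)), c (f ∘ σ) = c f

theorem tmap_expand (m : ℕ) (w : Fin (m+1) → Module.End K M) :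
    tmap K g M m w
      = ∑ f : Fin (m+1) → Fin (eDim K M),
          (∏ j, (bE K M).repr (w j) (f j)) • Phi K g M m f := by
  have hw : w = fun j => ∑ i, ((bE K M).repr (w j)) i • (bE K M) i :=
    funext fun j => ((bE K M).sum_repr (w j)).symm
  conv_lhs => rw [hw]
  rw [show tmap K g M m (fun j => ∑ i, ((bE K M).repr (w j)) i • (bE K M) i)
      = tmapL K g M m (fun j => ∑ i, ((bE K M).repr (w j)) i • (bE K M) i) from rfl]
  rw [MultilinearMap.map_sum]
  exact Finset.sum_congr rfl fun f _ => MultilinearMap.map_smul_univ _ _ _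

theorem isInv_prod (m : ℕ) (a : Module.End K M) :
    IsInv K M m (fun f => ∏ j, (bE K M).repr a (f j)) := by
  intro σ f
  exact Equiv.prod_comp σ fun j => (bE K M).repr a (f j)

open Function in
theorem eps_mul_Phi (m : ℕ) (a : Module.End K M) (i : Fin (m+1))
    (f : Fin (m+1) → Fin (eDim K M)) :
    tmap K g M m (update (fun _ => 1) i a) * Phi K g M m f
      = ∑ s, ((bE K M).repr (a * bE K M (f i)) s) • Phi K g M m (update f i s) := by
  unfold Phi
  rw [← tmap_mul]
  have h1 : (fun j => update (fun _ => (1:Module.End K M)) i a j * bE K M (f j))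
      = update (fun j => bE K M (f j)) i (a * bE K M (f i)) := by
    funext j
    by_cases h : j = i
    · subst h; simp
    · simp [h]
  rw [h1]
  have h2 : a * bE K M (f i) = ∑ s, ((bE K M).repr (a * bE K M (f i))) s • bE K M s :=
    ((bE K M).sum_repr _).symm
  conv_lhs => rw [h2]
  rw [show tmap K g M m = ⇑(tmapL K g M m) from rfl]
  rw [MultilinearMap.map_update_sum]
  refine Finset.sum_congr rfl fun s _ => ?_
  rw [MultilinearMap.map_update_smul]
  congr 1
  show tmap K g M m (update (fun j => bE K M (f j)) i (bE K M s)) = _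
  have h3 : update (fun j => bE K M (f j)) i (bE K M s) = fun j => bE K M (update f i s j) := by
    funext j
    by_cases h : j = i
    · subst h; simp
    · simp [h]
  rw [h3]
  rfl

/-- The new coefficient function obtained after multiplying by `δ(a)`. -/
noncomputable def cNext (m : ℕ) (a : Module.End K M)
    (c : (Fin (m+1) → Fin (eDim K M)) → K) :
    (Fin (m+1) → Fin (eDim K M)) → K :=
  fun gf => ∑ i, ∑ t, c (Function.update gf i t) * (bE K M).repr (a * bE K M t) (gf i)

open Function in
theorem isInv_cNext (m : ℕ) (a : Module.End K M) (c : (Fin (m+1) → Fin (eDim K M)) → K)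
    (hc : IsInv K M m c) : IsInv K M m (cNext K M m a c) := by
  intro σ gf
  unfold cNext
  have key : ∀ (i : Fin (m+1)) (t : Fin (eDim K M)),
      c (update (gf ∘ σ) i t) = c (update gf (σ i) t) := by
    intro i t
    rw [← update_comp_eq_of_injective gf σ.injective i t, hc σ]
  calc ∑ i, ∑ t, c (update (gf ∘ σ) i t) * (bE K M).repr (a * bE K M t) ((gf ∘ σ) i)
      = ∑ i, ∑ t, c (update gf (σ i) t) * (bE K M).repr (a * bE K M t) (gf (σ i)) := by
        refine Finset.sum_congr rfl fun i _ => Finset.sum_congr rfl fun t _ => ?_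
        rw [key]
        rfl
    _ = ∑ i, ∑ t, c (update gf i t) * (bE K M).repr (a * bE K M t) (gf i) :=
        Equiv.sum_comp σ fun i => ∑ t, c (update gf i t) * (bE K M).repr (a * bE K M t) (gf i)

end FinDim

section FinDim2
variable [FiniteDimensional K M]

open Function in
theorem delta_mul (m : ℕ) (a : Module.End K M)
    (c : (Fin (m+1) → Fin (eDim K M)) → K) :
    (∑ i : Fin (m+1), tmap K g M m (update (fun _ => 1) i a))
        * (∑ f, c f • Phi K g M m f)
      = ∑ gf, cNext K M m a c gf • Phi K g M m gf := by
  rw [Finset.sum_mul]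
  have step1 : ∀ i : Fin (m+1),
      tmap K g M m (update (fun _ => 1) i a) * (∑ f, c f • Phi K g M m f)
        = ∑ f, ∑ s, (c f * (bE K M).repr (a * bE K M (f i)) s) •
            Phi K g M m (update f i s) := by
    intro i
    rw [Finset.mul_sum]
    refine Finset.sum_congr rfl fun f _ => ?_
    rw [mul_smul_comm, eps_mul_Phi, Finset.smul_sum]
    exact Finset.sum_congr rfl fun s _ => (smul_smul _ _ _)
  rw [Finset.sum_congr rfl fun i _ => step1 i]
  unfold cNext
  simp only [Finset.sum_smul]
  conv_rhs => rw [Finset.sum_comm]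
  refine Finset.sum_congr rfl fun i _ => ?_
  have hinv : Function.Involutive
      (fun p : ((Fin (m+1) → Fin (eDim K M)) × Fin (eDim K M)) =>
        (update p.1 i p.2, p.1 i)) := by
    rintro ⟨f, s⟩
    simp
  rw [← Finset.sum_product', ← Finset.sum_product', Finset.univ_product_univ]
  rw [← Equiv.sum_comp hinv.toPerm
    (fun p : ((Fin (m+1) → Fin (eDim K M)) × Fin (eDim K M)) =>
      (c (update p.1 i p.2) * (bE K M).repr (a * bE K M p.2) (p.1 i)) • Phi K g M m p.1)]
  refine Finset.sum_congr rfl fun p _ => ?_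
  obtain ⟨f, s⟩ := p
  simp [Function.Involutive.coe_toPerm]

end FinDim2

section FinDim3
variable [FiniteDimensional K M]

open Function in
/-- The subspace of the tensor power spanned by symmetric operators applied to `v`. -/
noncomputable def Wsub (m : ℕ) (v : (tensorPower K g M m).carrier) :
    LieSubmodule K g (tensorPower K g M m).carrier where
  carrier := {u | ∃ c, IsInv K M m c ∧ u = (∑ f, c f • Phi K g M m f) v}
  zero_mem' := ⟨0, fun _ _ => rfl, by simp⟩
  add_mem' := by
    rintro u₁ u₂ ⟨c₁, h₁, rfl⟩ ⟨c₂, h₂, rfl⟩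
    refine ⟨c₁ + c₂, fun σ f => by simp [h₁ σ f, h₂ σ f], ?_⟩
    simp [add_smul, Finset.sum_add_distrib]
  smul_mem' := by
    rintro k u ⟨c, h, rfl⟩
    refine ⟨k • c, fun σ f => by simp [h σ f], ?_⟩
    simp [smul_smul, Finset.smul_sum]
  lie_mem := by
    rintro x u ⟨c, hc, rfl⟩
    refine ⟨cNext K M m (LieModule.toEnd K g M x) c,
      isInv_cNext K M m _ c hc, ?_⟩
    have h1 : ⁅x, (∑ f, c f • Phi K g M m f) v⁆
        = (LieModule.toEnd K g (tensorPower K g M m).carrier x)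
            ((∑ f, c f • Phi K g M m f) v) := rfl
    rw [h1, toEnd_eq, ← Module.End.mul_apply, delta_mul]

theorem v_mem_Wsub (m : ℕ) (v : (tensorPower K g M m).carrier) : v ∈ Wsub K g M m v := by
  refine ⟨fun f => ∏ j, (bE K M).repr 1 (f j), isInv_prod K M m 1, ?_⟩
  rw [← tmap_expand, tmap_one]
  rfl

open Function in
theorem mem_span_OS (m : ℕ) (v : (tensorPower K g M m).carrier)
    (c : (Fin (m+1) → Fin (eDim K M)) → K) (hc : IsInv K M m c) :
    (∑ f, c f • Phi K g M m f) v ∈ Submodule.span K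
      (Set.range (fun μ : {h : Fin (m+1) → Fin (eDim K M) // Monotone h} =>
        ∑ f ∈ Finset.univ.filter (fun f' => f' ∘ Tuple.sort f' = μ.1),
          Phi K g M m f v)) := by
  classical
  have happ : (∑ f, c f • Phi K g M m f) v = ∑ f, c f • Phi K g M m f v := by
    rw [LinearMap.sum_apply]
    exact Finset.sum_congr rfl fun f _ => rfl
  rw [happ]
  have heq : ∀ f₀ ∈ (Finset.univ : Finset (Fin (m+1) → Fin (eDim K M))),
      (fun μ => c μ • ∑ f ∈ Finset.univ.filter (fun f' => f' ∘ Tuple.sort f' = μ),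
        Phi K g M m f v) (f₀ ∘ Tuple.sort f₀)
      = ∑ f ∈ Finset.univ.filter
          (fun f' => f' ∘ Tuple.sort f' = f₀ ∘ Tuple.sort f₀), c f • Phi K g M m f v := by
    intro f₀ _
    simp only
    rw [Finset.smul_sum]
    refine Finset.sum_congr rfl fun f hf => ?_
    have hf' : f ∘ Tuple.sort f = f₀ ∘ Tuple.sort f₀ := (Finset.mem_filter.1 hf).2
    have : c (f ∘ Tuple.sort f) = c f := hc (Tuple.sort f) f
    rw [← hf', this]
  rw [← Finset.sum_image'
    (g := fun f : Fin (m+1) → Fin (eDim K M) => f ∘ Tuple.sort f)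
    (h := fun f => c f • Phi K g M m f v)
    (f := fun μ => c μ • ∑ f ∈ Finset.univ.filter (fun f' => f' ∘ Tuple.sort f' = μ),
        Phi K g M m f v) heq]
  refine Submodule.sum_mem _ fun μ hμ => ?_
  obtain ⟨f₀, -, rfl⟩ := Finset.mem_image.1 hμ
  exact Submodule.smul_mem _ _ (Submodule.subset_span
    ⟨⟨f₀ ∘ Tuple.sort f₀, Tuple.monotone_sort f₀⟩, rfl⟩)

end FinDim3

theorem card_mono_le (m D : ℕ) :
    Fintype.card {h : Fin (m+1) → Fin D // Monotone h} ≤ ((m+1) + D - 1).choose (m+1) := by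
  classical
  rcases Nat.eq_zero_or_pos D with hD | hD
  · subst hD
    have hempty : IsEmpty {h : Fin (m+1) → Fin 0 // Monotone h} :=
      ⟨fun p => (p.1 0).elim0⟩
    rw [Fintype.card_eq_zero]
    exact Nat.zero_le _
  · obtain ⟨D', rfl⟩ : ∃ D', D = D' + 1 := ⟨D - 1, by omega⟩
    have hcard : (m+1) + (D'+1) - 1 = m + D' + 1 := by omega
    rw [hcard]
    set emb : {h : Fin (m+1) → Fin (D'+1) // Monotone h} → (Fin (m+1) → Fin (m + D' + 1)) :=
      fun h k => ⟨(h.1 k : ℕ) + k, by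
        have h1 : (h.1 k : ℕ) < D' + 1 := (h.1 k).is_lt
        have h2 : (k : ℕ) < m + 1 := k.is_lt
        omega⟩ with hemb
    have hsm : ∀ h, StrictMono (emb h) := by
      intro h k l hkl
      have h1 : (h.1 k : ℕ) ≤ h.1 l := h.2 hkl.le
      have h2 : (k : ℕ) < l := hkl
      simp only [hemb, Fin.mk_lt_mk]
      omega
    set J : {h : Fin (m+1) → Fin (D'+1) // Monotone h} →
        {s : Finset (Fin (m + D' + 1)) // s.card = m + 1} :=
      fun h => ⟨Finset.image (emb h) Finset.univ, by
        rw [Finset.card_image_of_injective _ (hsm h).injective, Finset.card_univ,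
          Fintype.card_fin]⟩ with hJ
    have Jinj : Function.Injective J := by
      intro h₁ h₂ hJeq
      have hset : Finset.image (emb h₁) Finset.univ = Finset.image (emb h₂) Finset.univ :=
        congrArg Subtype.val hJeq
      have hc1 : (Finset.image (emb h₁) Finset.univ).card = m + 1 := (J h₁).2
      have e1 : emb h₁ = (Finset.image (emb h₁) Finset.univ).orderEmbOfFin hc1 :=
        Finset.orderEmbOfFin_unique hc1
          (fun k => Finset.mem_image_of_mem _ (Finset.mem_univ k)) (hsm h₁)
      have e2 : emb h₂ = (Finset.image (emb h₁) Finset.univ).orderEmbOfFin hc1 :=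
        Finset.orderEmbOfFin_unique hc1
          (fun k => hset ▸ Finset.mem_image_of_mem _ (Finset.mem_univ k)) (hsm h₂)
      have hembeq : emb h₁ = emb h₂ := e1.trans e2.symm
      refine Subtype.ext (funext fun k => ?_)
      have := congrFun hembeq k
      have hval : ((h₁.1 k : ℕ) + k) = ((h₂.1 k : ℕ) + k) := congrArg Fin.val this
      exact Fin.ext (by omega)
    calc Fintype.card {h : Fin (m+1) → Fin (D'+1) // Monotone h}
        ≤ Fintype.card {s : Finset (Fin (m + D' + 1)) // s.card = m + 1} :=
          Fintype.card_le_of_injective J Jinj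
      _ = (m + D' + 1).choose (m+1) := by
          rw [Fintype.card_finset_len, Fintype.card_fin]

section MainBound
variable [FiniteDimensional K M]

theorem main_bound (m : ℕ) (v : (tensorPower K g M m).carrier) :
    Module.rank K (LieSubmodule.lieSpan K g ({v} : Set (tensorPower K g M m).carrier))
      ≤ (((m+1) + eDim K M - 1).choose (m+1) : Cardinal) := by
  have h1 : LieSubmodule.lieSpan K g ({v} : Set (tensorPower K g M m).carrier)
      ≤ Wsub K g M m v :=
    (LieSubmodule.lieSpan_le).2 (Set.singleton_subset_iff.2 (v_mem_Wsub K g M m v))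
  have h2 : (Wsub K g M m v : Submodule K (tensorPower K g M m).carrier)
      ≤ Submodule.span K
        (Set.range (fun μ : {h : Fin (m+1) → Fin (eDim K M) // Monotone h} =>
          ∑ f ∈ Finset.univ.filter (fun f' => f' ∘ Tuple.sort f' = μ.1),
            Phi K g M m f v)) := by
    rintro u ⟨c, hc, rfl⟩
    exact mem_span_OS K g M m v c hc
  have r1 : Module.rank K
      (LieSubmodule.lieSpan K g ({v} : Set (tensorPower K g M m).carrier))
      ≤ Module.rank K (Wsub K g M m v) :=
    Submodule.rank_mono ((LieSubmodule.toSubmodule_le_toSubmodule _ _).2 h1)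
  have r2 : Module.rank K (Wsub K g M m v) ≤ Module.rank K (Submodule.span K
      (Set.range (fun μ : {h : Fin (m+1) → Fin (eDim K M) // Monotone h} =>
        ∑ f ∈ Finset.univ.filter (fun f' => f' ∘ Tuple.sort f' = μ.1),
          Phi K g M m f v))) :=
    Submodule.rank_mono h2
  have r3 : Module.rank K (Submodule.span K
      (Set.range (fun μ : {h : Fin (m+1) → Fin (eDim K M) // Monotone h} =>
        ∑ f ∈ Finset.univ.filter (fun f' => f' ∘ Tuple.sort f' = μ.1),
          Phi K g M m f v)))
      ≤ (Fintype.card {h : Fin (m+1) → Fin (eDim K M) // Monotone h} : Cardinal) := by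
    refine (rank_span_le _).trans ?_
    refine Cardinal.mk_range_le.trans ?_
    rw [Cardinal.mk_fintype]
  have r4 : (Fintype.card {h : Fin (m+1) → Fin (eDim K M) // Monotone h} : Cardinal)
      ≤ (((m+1) + eDim K M - 1).choose (m+1) : Cardinal) := by
    exact_mod_cast Nat.cast_le.2 (card_mono_le m (eDim K M))
  exact ((r1.trans r2).trans r3).trans r4

end MainBound

/-- Let `M` be a finite-dimensional module over a Lie algebra `g`, `d = dim M`.
For every `n ≥ 1`, every cyclic submodule `C = U(g)·v` of `M^{⊗n}` has dimension
at most `(n + d² - 1).choose n`, a polynomial bound of degree `d² - 1` in `n`. -/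
theorem cyclic_submodule_tensorPower_dim_le
    [FiniteDimensional K M]
    (d : ℕ) (hd : d = Module.finrank K M)
    (n : ℕ) (hn : 1 ≤ n)
    (v : (tensorPower K g M (n - 1)).carrier) :
    letI B := tensorPower K g M (n - 1)
    letI := B.acg; letI := B.mod; letI := B.lrm; letI := B.lm
    Module.rank K (LieSubmodule.lieSpan K g ({v} : Set B.carrier))
      ≤ ((n + d ^ 2 - 1).choose n : Cardinal) := by
  have hE : eDim K M = d ^ 2 := by
    rw [hd, pow_two]
    exact Module.finrank_linearMap K K M M
  have hm : (n - 1) + 1 = n := by omega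
  have := main_bound K g M (n - 1) v
  rw [hE, hm] at this
  exact this
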